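/- Let Ω ⊆ ℂ be a nonempty open connected set and let {zₙ}ₙ∈ℕ be a sequence of points of Ω having no accumulation point in Ω. Let {mₙ}ₙ∈ℕ be a sequence of positive integers and for each n let Iₙ be the ideal of the ring A(Ω) of analytic functions on Ω consisting of all functions of the form (z − zₙ)^{mₙ}·g(z) with g analytic on Ω. Then for every compact set K ⊆ Ω and every ε > 0 there exists n₀ ∈ ℕ such that for all n ≥ n₀ and every analytic function f on Ω there exists an analytic function g on Ω with sup_{z ∈ K} |f(z) − (z − zₙ)^{mₙ} g(z)| < ε. (That is, Iₙ converges to A(Ω) in the hyperspace sense for the compact–open topology.) -/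

import Mathlib

set_option maxHeartbeats 1000000


open Pointwise

open Complex Filter Metric in
/-- Auxiliary: if a sequence frequently lies in a compact set, it has a cluster point there. -/
lemma exists_mapClusterPt_of_frequently_mem {z : ℕ → ℂ} {C : Set ℂ} (hC : IsCompact C)
    (h : ∃ᶠ n in atTop, z n ∈ C) : ∃ w ∈ C, MapClusterPt w atTop z := by
  have h' : ∃ᶠ x in Filter.map z atTop, x ∈ C := Filter.frequently_map.mpr h
  have hne : (Filter.map z atTop ⊓ Filter.principal C).NeBot :=
    Filter.frequently_mem_iff_neBot.mp h'
  obtain ⟨w, hwC, hw⟩ := hC.exists_clusterPt (f := Filter.map z atTop ⊓ Filter.principal C) inf_le_right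
  exact ⟨w, hwC, hw.mono inf_le_left⟩

open Complex Filter Metric in
/-- Auxiliary: elementary-factor style approximation. If `(w - ζ) * r w = 1 + τ w` on `K`
with `|τ| ≤ 1/2` on `K` and `τ, r` analytic on `Ω`, then some multiple of `(w - ζ)^m` is
uniformly close to `1` on `K`. -/
lemma key_approx (Ω K : Set ℂ) (ζ : ℂ) (M : ℕ) (η : ℝ) (hη : 0 < η)
    (τ r : ℂ → ℂ) (hτ : DifferentiableOn ℂ τ Ω) (hr : DifferentiableOn ℂ r Ω)
    (hrel : ∀ w ∈ K, (w - ζ) * r w = 1 + τ w)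
    (hbound : ∀ w ∈ K, ‖τ w‖ ≤ 1 / 2) :
    ∃ g₀ : ℂ → ℂ, DifferentiableOn ℂ g₀ Ω ∧
      ∀ w ∈ K, ‖1 - (w - ζ) ^ M * g₀ w‖ < η := by
  -- choose N with (M : ℝ) * (1/2)^N < min (η/2) 1
  obtain ⟨N, hN⟩ : ∃ N : ℕ, (M : ℝ) * (1 / 2) ^ N < min (η / 2) 1 := by
    have h2 : Filter.Tendsto (fun N : ℕ => (M : ℝ) * (1 / 2) ^ N) Filter.atTop (nhds 0) := by
      simpa using (tendsto_pow_atTop_nhds_zero_of_lt_one (by norm_num) (by norm_num :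
        (1 / 2 : ℝ) < 1)).const_mul (M : ℝ)
    have := (h2.eventually_lt_const (by positivity : (0:ℝ) < min (η / 2) 1)).exists
    exact this
  have hlogT : Differentiable ℂ (logTaylor (N + 1)) := by
    have h : logTaylor (N + 1) =
        fun z : ℂ => ∑ j ∈ Finset.range (N + 1), (-1) ^ (j + 1) * z ^ j / (j : ℂ) := rfl
    rw [h]
    exact Differentiable.fun_sum fun j _ => ((differentiable_pow j).const_mul _).div_const _
  refine ⟨fun w => r w ^ M * Complex.exp (-(M : ℂ) * logTaylor (N + 1) (τ w)), ?_, ?_⟩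
  · apply DifferentiableOn.mul (hr.pow M)
    apply DifferentiableOn.cexp
    apply DifferentiableOn.const_mul
    exact fun x hx => (hlogT (τ x)).differentiableWithinAt.comp x (hτ x hx) (Set.mapsTo_univ _ _)
  · intro w hw
    set t : ℂ := τ w with ht
    have htle : ‖t‖ ≤ 1 / 2 := hbound w hw
    have htlt : ‖t‖ < 1 := lt_of_le_of_lt htle (by norm_num)
    have h1t : (1 : ℂ) + t ≠ 0 := by
      intro h
      have : ‖t‖ = 1 := by
        have : t = -1 := by linear_combination h
        simp [this]
      linarith
    have hb : (1 + t) ^ M = Complex.exp ((M : ℂ) * Complex.log (1 + t)) := by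
      rw [Complex.exp_nat_mul, Complex.exp_log h1t]
    have hexp : (w - ζ) ^ M * (r w ^ M * Complex.exp (-(M : ℂ) * logTaylor (N + 1) t)) =
        Complex.exp ((M : ℂ) * (Complex.log (1 + t) - logTaylor (N + 1) t)) := by
      calc (w - ζ) ^ M * (r w ^ M * Complex.exp (-(M : ℂ) * logTaylor (N + 1) t))
          = ((w - ζ) * r w) ^ M * Complex.exp (-(M : ℂ) * logTaylor (N + 1) t) := by
            rw [mul_pow]; ring
        _ = Complex.exp ((M : ℂ) * Complex.log (1 + t)) *
              Complex.exp (-(M : ℂ) * logTaylor (N + 1) t) := by rw [hrel w hw, hb]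
        _ = Complex.exp ((M : ℂ) * (Complex.log (1 + t) - logTaylor (N + 1) t)) := by
            rw [← Complex.exp_add]
            congr 1
            ring
    rw [hexp]
    set s : ℂ := (M : ℂ) * (Complex.log (1 + t) - logTaylor (N + 1) t) with hs
    have hsb : ‖s‖ ≤ (M : ℝ) * (1 / 2) ^ N := by
      have h0 : ‖Complex.log (1 + t) - logTaylor (N + 1) t‖ ≤
          ‖t‖ ^ (N + 1) * (1 - ‖t‖)⁻¹ / (N + 1) := Complex.norm_log_sub_logTaylor_le N htlt
      push_cast at h0
      have h1 : ‖t‖ ^ (N + 1) ≤ (1 / 2 : ℝ) ^ (N + 1) :=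
        pow_le_pow_left₀ (norm_nonneg t) htle _
      have h2 : (1 - ‖t‖)⁻¹ ≤ 2 := by
        have : (1 / 2 : ℝ) ≤ 1 - ‖t‖ := by
          have := htle; linarith
        calc (1 - ‖t‖)⁻¹ ≤ (1 / 2 : ℝ)⁻¹ := by
              apply inv_anti₀ (by norm_num) this
          _ = 2 := by norm_num
      have h3 : ‖t‖ ^ (N + 1) * (1 - ‖t‖)⁻¹ / ((N : ℝ) + 1) ≤ (1 / 2 : ℝ) ^ N := by
        have hN1 : (1:ℝ) ≤ (N:ℝ) + 1 := by
          have : (0:ℝ) ≤ (N:ℝ) := Nat.cast_nonneg N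
          linarith
        have hinv : (0:ℝ) ≤ (1 - ‖t‖)⁻¹ := inv_nonneg.mpr (by linarith)
        have key : ‖t‖ ^ (N + 1) * (1 - ‖t‖)⁻¹ ≤ (1 / 2 : ℝ) ^ N := by
          calc ‖t‖ ^ (N + 1) * (1 - ‖t‖)⁻¹ ≤ (1 / 2 : ℝ) ^ (N + 1) * 2 :=
                mul_le_mul h1 h2 hinv (by positivity)
            _ = (1 / 2 : ℝ) ^ N := by ring
        calc ‖t‖ ^ (N + 1) * (1 - ‖t‖)⁻¹ / ((N : ℝ) + 1)
            ≤ ‖t‖ ^ (N + 1) * (1 - ‖t‖)⁻¹ :=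
              div_le_self (mul_nonneg (by positivity) hinv) hN1
          _ ≤ (1 / 2 : ℝ) ^ N := key
      calc ‖s‖ = (M : ℝ) * ‖Complex.log (1 + t) - logTaylor (N + 1) t‖ := by
            simp [hs, norm_mul]
        _ ≤ (M : ℝ) * ((1 / 2 : ℝ) ^ N) := by
            apply mul_le_mul_of_nonneg_left (h0.trans h3) (Nat.cast_nonneg M)
    have hs1 : ‖s‖ ≤ 1 := le_trans hsb (le_of_lt (lt_of_lt_of_le hN (min_le_right _ _)))
    have := Complex.norm_exp_sub_one_le hs1
    calc ‖1 - Complex.exp s‖ = ‖Complex.exp s - 1‖ :=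
          norm_sub_rev 1 (Complex.exp s)
      _ ≤ 2 * ‖s‖ := this
      _ ≤ 2 * ((M : ℝ) * (1 / 2) ^ N) := by
          apply mul_le_mul_of_nonneg_left hsb (by norm_num)
      _ < 2 * (η / 2) := by
          apply mul_lt_mul_of_pos_left (lt_of_lt_of_le hN (min_le_left _ _)) (by norm_num)
      _ = η := by ring

open Complex Filter Metric in
/-- Auxiliary: from the multiplicative approximation to `1`, get the approximation to `f`. -/
lemma key_approx_f (Ω K : Set ℂ) (hK : IsCompact K) (hKΩ : K ⊆ Ω) (ζ : ℂ) (M : ℕ)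
    (ε : ℝ) (hε : 0 < ε)
    (τ r : ℂ → ℂ) (hτ : DifferentiableOn ℂ τ Ω) (hr : DifferentiableOn ℂ r Ω)
    (hrel : ∀ w ∈ K, (w - ζ) * r w = 1 + τ w)
    (hbound : ∀ w ∈ K, ‖τ w‖ ≤ 1 / 2)
    (f : ℂ → ℂ) (hf : DifferentiableOn ℂ f Ω) :
    ∃ g : ℂ → ℂ, DifferentiableOn ℂ g Ω ∧
      ∀ w ∈ K, ‖f w - (w - ζ) ^ M * g w‖ < ε := by
  obtain ⟨C, hC⟩ := hK.exists_bound_of_continuousOn (hf.continuousOn.mono hKΩ)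
  set C' : ℝ := max C 0 with hC'
  have hC'0 : 0 ≤ C' := le_max_right _ _
  have hfb : ∀ w ∈ K, ‖f w‖ ≤ C' := fun w hw => le_trans (hC w hw) (le_max_left _ _)
  have hη : 0 < ε / (C' + 1) := by positivity
  obtain ⟨g₀, hg₀, hg₀b⟩ := key_approx Ω K ζ M (ε / (C' + 1)) hη τ r hτ hr hrel hbound
  refine ⟨fun w => f w * g₀ w, hf.mul hg₀, ?_⟩
  intro w hw
  have h1 : f w - (w - ζ) ^ M * (f w * g₀ w) = f w * (1 - (w - ζ) ^ M * g₀ w) := by ring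
  rw [h1, norm_mul]
  calc ‖f w‖ * ‖1 - (w - ζ) ^ M * g₀ w‖
      ≤ C' * (ε / (C' + 1)) := by
        apply mul_le_mul (hfb w hw) (le_of_lt (hg₀b w hw)) (by positivity) hC'0
    _ = ε * (C' / (C' + 1)) := by ring
    _ < ε * 1 := by
        apply mul_lt_mul_of_pos_left _ hε
        rw [div_lt_one (by positivity)]
        linarith
    _ = ε := mul_one ε

/-- Let `Ω ⊆ ℂ` be a nonempty open connected set and `{zₙ}` a sequence in `Ω` with no
accumulation point in `Ω`, and let `{mₙ}` be positive integers. Then for every compact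
`K ⊆ Ω` and `ε > 0` there is `n₀` such that for all `n ≥ n₀` and every analytic `f` on `Ω`
there is an analytic `g` on `Ω` with `|f(z) - (z - zₙ)^{mₙ} g(z)| < ε` on `K`; i.e. the
ideals `Iₙ = ⟨(z - zₙ)^{mₙ}⟩` of `A(Ω)` converge to `A(Ω)` in the hyperspace sense for the
compact-open topology. -/
theorem analytic_ideals_converge (Ω : Set ℂ) (hΩ : IsOpen Ω) (hne : Ω.Nonempty)
    (hconn : IsConnected Ω) (z : ℕ → ℂ) (hz : ∀ n, z n ∈ Ω)
    (hacc : ∀ w ∈ Ω, ¬ MapClusterPt w Filter.atTop z)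
    (m : ℕ → ℕ) (hm : ∀ n, 0 < m n) :
    ∀ K ⊆ Ω, IsCompact K → ∀ ε > (0 : ℝ), ∃ n₀ : ℕ, ∀ n ≥ n₀,
      ∀ f : ℂ → ℂ, DifferentiableOn ℂ f Ω →
        ∃ g : ℂ → ℂ, DifferentiableOn ℂ g Ω ∧
          ∀ w ∈ K, ‖f w - (w - z n) ^ (m n) * g w‖ < ε := by
  intro K hKΩ hK ε hε
  rcases K.eq_empty_or_nonempty with rfl | hKne
  · exact ⟨0, fun n _ f hf => ⟨f, hf, fun w hw => absurd hw (Set.notMem_empty w)⟩⟩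
  -- bound on K
  obtain ⟨R₀, hR₀⟩ := (hK.isBounded).subset_closedBall 0
  set R : ℝ := max R₀ 0 with hRdef
  have hRK : ∀ w ∈ K, ‖w‖ ≤ R := by
    intro w hw
    have := hR₀ hw
    rw [Metric.mem_closedBall, dist_zero_right] at this
    exact le_trans this (le_max_left _ _)
  have hR0 : 0 ≤ R := le_max_right _ _
  set ρ : ℝ := 2 * R + 2 with hρdef
  have hρ0 : 0 < ρ := by positivity
  -- shared construction for |z n| ≥ ρ
  have far_case : ∀ n : ℕ, ρ ≤ ‖z n‖ →
      ∀ f : ℂ → ℂ, DifferentiableOn ℂ f Ω →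
        ∃ g : ℂ → ℂ, DifferentiableOn ℂ g Ω ∧
          ∀ w ∈ K, ‖f w - (w - z n) ^ (m n) * g w‖ < ε := by
    intro n hn f hf
    have hζ0 : z n ≠ 0 := by
      intro h
      rw [h] at hn
      simp at hn
      linarith
    apply key_approx_f Ω K hK hKΩ (z n) (m n) ε hε (fun w => -(w / z n)) (fun w => -(z n)⁻¹)
      _ _ _ _ f hf
    · exact (differentiableOn_id.div_const _).neg
    · exact differentiableOn_const _
    · intro w _
      field_simp
      ring
    · intro w hw
      rw [norm_neg, norm_div]
      rw [div_le_iff₀ (norm_pos_iff.mpr hζ0)]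
      have h1 : ‖w‖ ≤ R := hRK w hw
      have h2 : ρ ≤ ‖z n‖ := hn
      rw [hρdef] at h2
      linarith
  -- frequently-in-B helper
  have freq_of_infinite : ∀ B : Set ℕ, B.Infinite → ∃ᶠ n in Filter.atTop, n ∈ B := by
    intro B hB
    rw [Filter.frequently_atTop]
    intro N
    obtain ⟨b, hbB, hb⟩ := hB.exists_gt N
    exact ⟨b, le_of_lt hb, hbB⟩
  by_cases hcompl : Ωᶜ.Nonempty
  · -- Ω has nonempty complement
    set B : Set ℕ := {n | ‖z n‖ < ρ ∧
        Metric.infDist (z n) K < 4 * Metric.infDist (z n) Ωᶜ} with hBdef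
    have hBfin : B.Finite := by
      by_contra hBinf
      replace hBinf : B.Infinite := hBinf
      set C : Set ℂ := Metric.closedBall 0 ρ ∩
          {p : ℂ | Metric.infDist p K ≤ 4 * Metric.infDist p Ωᶜ} with hCdef
      have hCcomp : IsCompact C := (isCompact_closedBall 0 ρ).inter_right
        (isClosed_le (Metric.continuous_infDist_pt K)
          (continuous_const.mul (Metric.continuous_infDist_pt Ωᶜ)))
      have hfreq : ∃ᶠ n in Filter.atTop, z n ∈ C := by
        apply (freq_of_infinite B hBinf).mono
        intro n hn
        refine ⟨?_, le_of_lt hn.2⟩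
        rw [Metric.mem_closedBall, dist_zero_right]
        exact le_of_lt hn.1
      obtain ⟨w, hwC, hwcl⟩ := exists_mapClusterPt_of_frequently_mem hCcomp hfreq
      have hwΩ : w ∈ Ω := by
        by_contra hw
        have h0 : Metric.infDist w Ωᶜ = 0 := Metric.infDist_zero_of_mem hw
        have h1 : Metric.infDist w K ≤ 0 := by
          have h2 : Metric.infDist w K ≤ 4 * Metric.infDist w Ωᶜ := hwC.2
          rw [h0] at h2
          linarith
        have h2 : Metric.infDist w K = 0 := le_antisymm h1 Metric.infDist_nonneg
        have : w ∈ K := (hK.isClosed.mem_iff_infDist_zero hKne).mpr h2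
        exact hw (hKΩ this)
      exact hacc w hwΩ hwcl
    obtain ⟨N, hN⟩ := hBfin.bddAbove
    refine ⟨N + 1, fun n hn f hf => ?_⟩
    have hnB : n ∉ B := fun h => by
      have := hN h
      omega
    by_cases habs : ρ ≤ ‖z n‖
    · exact far_case n habs f hf
    · have hd : 4 * Metric.infDist (z n) Ωᶜ ≤ Metric.infDist (z n) K := by
        by_contra h
        exact hnB ⟨not_le.mp habs, not_le.mp h⟩
      set D : ℝ := Metric.infDist (z n) K with hDdef
      have hD0 : 0 < D := by
        rcases lt_or_eq_of_le (Metric.infDist_nonneg : 0 ≤ D) with h | h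
        · exact h
        · exfalso
          have hD : D = 0 := h.symm
          have h1 : Metric.infDist (z n) Ωᶜ = 0 := by
            rw [hD] at hd
            have h2 : 0 ≤ Metric.infDist (z n) Ωᶜ := Metric.infDist_nonneg
            linarith
          have : z n ∈ Ωᶜ := (hΩ.isClosed_compl.mem_iff_infDist_zero hcompl).mpr h1
          exact this (hz n)
      have hlt : Metric.infDist (z n) Ωᶜ < D / 3 := by linarith
      obtain ⟨a, haΩ, hadist⟩ := (Metric.infDist_lt_iff hcompl).mp hlt
      have hane : ∀ w ∈ Ω, w - a ≠ 0 := by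
        intro w hw h
        apply haΩ
        rw [sub_eq_zero] at h
        rw [← h]
        exact hw
      apply key_approx_f Ω K hK hKΩ (z n) (m n) ε hε
        (fun w => (a - z n) / (w - a)) (fun w => (w - a)⁻¹) _ _ _ _ f hf
      · exact DifferentiableOn.div (differentiableOn_const _)
          ((differentiable_id.sub_const a).differentiableOn) hane
      · exact DifferentiableOn.inv ((differentiable_id.sub_const a).differentiableOn) hane
      · intro w hw
        have h1 : w - a ≠ 0 := hane w (hKΩ hw)
        field_simp
        ring
      · intro w hw
        have hwz : D ≤ ‖w - z n‖ := by
          have := Metric.infDist_le_dist_of_mem hw (x := z n)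
          rwa [Complex.dist_eq, norm_sub_rev] at this
        have hanum : ‖a - z n‖ ≤ D / 3 := by
          rw [Complex.dist_eq] at hadist
          rw [norm_sub_rev]
          exact le_of_lt hadist
        have hden : 2 * D / 3 ≤ ‖w - a‖ := by
          have h1 : ‖w - z n‖ ≤ ‖w - a‖ + ‖a - z n‖ := by
            calc ‖w - z n‖ = ‖(w - a) + (a - z n)‖ := by ring_nf
              _ ≤ _ := norm_add_le _ _
          linarith
        rw [norm_div]
        rw [div_le_iff₀ (by linarith : (0:ℝ) < ‖w - a‖)]
        linarith
  · -- Ω = ℂ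
    have hΩuniv : Ω = Set.univ := by
      rw [Set.not_nonempty_iff_eq_empty] at hcompl
      rwa [← Set.compl_empty_iff]
    set B : Set ℕ := {n | ‖z n‖ < ρ} with hBdef
    have hBfin : B.Finite := by
      by_contra hBinf
      replace hBinf : B.Infinite := hBinf
      have hfreq : ∃ᶠ n in Filter.atTop, z n ∈ Metric.closedBall (0:ℂ) ρ := by
        apply (freq_of_infinite B hBinf).mono
        intro n hn
        rw [Metric.mem_closedBall, dist_zero_right]
        exact le_of_lt hn
      obtain ⟨w, _, hwcl⟩ := exists_mapClusterPt_of_frequently_mem (isCompact_closedBall 0 ρ) hfreq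
      exact hacc w (hΩuniv ▸ Set.mem_univ w) hwcl
    obtain ⟨N, hN⟩ := hBfin.bddAbove
    refine ⟨N + 1, fun n hn f hf => ?_⟩
    have hnB : n ∉ B := fun h => by
      have := hN h
      omega
    exact far_case n (not_lt.mp hnB) f hf
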